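/- Let t₀ > 0, d ≥ 1, and let u : [0, t₀] × ℝ^d → ℝ^d be continuous and bounded, and Lipschitz continuous in the space variable uniformly in t. Let X : [0, t₀] × ℝ^d → ℝ^d be continuous with X(0, z) = z and ∂_t X(t, z) = u(t, X(t, z)) for all t ∈ [0, t₀] and z ∈ ℝ^d. Let μ₀ be a locally finite Borel measure on ℝ^d, and define μ_t := (X(t, ·))_* μ₀ as the pushforward measure. Then μ is a distributional solution of the transport equation ∂_t μ + div(u μ) = 0 with initial datum μ₀: for every continuously differentiable φ : [0, t₀) × ℝ^d → ℝ with compact support, ∫₀^{t₀} ∫_{ℝ^d} ( ∂_t φ(t, z) + u(t, z)·∇_z φ(t, z) ) dμ_t(z) dt + ∫_{ℝ^d} φ(0, z) dμ₀(z) = 0. -/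

import Mathlib

open MeasureTheory
open scoped RealInnerProductSpace

/-- **Proposition 3.11 (`prop:MV`), existence part for `b = 0`:**
the pushforward of a locally finite measure along the flow of a bounded, continuous vector
field `u` that is Lipschitz in space uniformly in time is a distributional solution of the
transport equation `∂_t μ + div(u μ) = 0`, `μ(0) = μ₀`: for every `C¹` compactly supported
test function `φ` on `[0,t₀) × ℝ^d`,
`∫₀^{t₀} ∫ (∂_t φ + u·∇_z φ) dμ_t dt + ∫ φ(0,·) dμ₀ = 0`. -/
theorem stmt_13 (d : ℕ) (hd : 1 ≤ d) (t₀ : ℝ) (ht₀ : 0 < t₀)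
    (u : ℝ → EuclideanSpace ℝ (Fin d) → EuclideanSpace ℝ (Fin d))
    (hu_cont : ContinuousOn (fun p : ℝ × EuclideanSpace ℝ (Fin d) => u p.1 p.2)
      (Set.Icc 0 t₀ ×ˢ Set.univ))
    (hu_bdd : ∃ C : ℝ, ∀ t ∈ Set.Icc (0 : ℝ) t₀, ∀ z, ‖u t z‖ ≤ C)
    (hu_lip : ∃ L : NNReal, ∀ t ∈ Set.Icc (0 : ℝ) t₀, LipschitzWith L (u t))
    (X : ℝ → EuclideanSpace ℝ (Fin d) → EuclideanSpace ℝ (Fin d))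
    (hX_cont : ContinuousOn (fun p : ℝ × EuclideanSpace ℝ (Fin d) => X p.1 p.2)
      (Set.Icc 0 t₀ ×ˢ Set.univ))
    (hX0 : ∀ z, X 0 z = z)
    (hX_ode : ∀ z, ∀ t ∈ Set.Icc (0 : ℝ) t₀,
      HasDerivWithinAt (fun s => X s z) (u t (X t z)) (Set.Icc 0 t₀) t)
    (μ₀ : Measure (EuclideanSpace ℝ (Fin d))) [IsLocallyFiniteMeasure μ₀]
    (φ : ℝ × EuclideanSpace ℝ (Fin d) → ℝ)
    (hφ : ContDiff ℝ 1 φ) (hφc : HasCompactSupport φ)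
    (hφt : ∀ z, ∀ t, t₀ ≤ t → φ (t, z) = 0) :
    (∫ t in Set.Ioc (0 : ℝ) t₀,
        ∫ z, (deriv (fun s => φ (s, z)) t + ⟪u t z, gradient (fun w => φ (t, w)) z⟫)
          ∂(Measure.map (X t) μ₀))
      + (∫ z, φ (0, z) ∂μ₀) = 0 := by
  classical
  obtain ⟨C, hC⟩ := hu_bdd
  obtain ⟨L, hL⟩ := hu_lip
  have hC0 : 0 ≤ C := le_trans (norm_nonneg _) (hC 0 ⟨le_rfl, ht₀.le⟩ 0)
  have hφd : Differentiable ℝ φ := hφ.differentiable one_ne_zero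
  set Dφ := fderiv ℝ φ with hDφdef
  have hDφc : Continuous Dφ := hφ.continuous_fderiv one_ne_zero
  have hDφcs : HasCompactSupport Dφ := hφc.fderiv (𝕜 := ℝ)
  -- pointwise identity for the integrand
  have key : ∀ (t : ℝ) (z : EuclideanSpace ℝ (Fin d)),
      deriv (fun s => φ (s, z)) t + ⟪u t z, gradient (fun w => φ (t, w)) z⟫
        = Dφ (t, z) (1, u t z) := by
    intro t z
    have h1 : HasDerivAt (fun s => φ (s, z)) (Dφ (t, z) (1, 0)) t :=
      (hφd (t, z)).hasFDerivAt.comp_hasDerivAt t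
        ((hasDerivAt_id t).prodMk (hasDerivAt_const t z))
    have h2 : HasFDerivAt (fun w => φ (t, w))
        ((Dφ (t, z)).comp (ContinuousLinearMap.inr ℝ ℝ (EuclideanSpace ℝ (Fin d)))) z :=
      (hφd (t, z)).hasFDerivAt.comp z (hasFDerivAt_prodMk_right t z)
    have h3 : ⟪u t z, gradient (fun w => φ (t, w)) z⟫
        = fderiv ℝ (fun w => φ (t, w)) z (u t z) := by
      rw [real_inner_comm, gradient, ← InnerProductSpace.toDual_apply_apply,
        LinearIsometryEquiv.apply_symm_apply]
    rw [h1.deriv, h3, h2.fderiv]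
    simp only [ContinuousLinearMap.comp_apply, ContinuousLinearMap.inr_apply]
    rw [← map_add]
    norm_num [Prod.mk_add_mk]
  -- derivative of the composition along the flow
  have hcomp : ∀ z : EuclideanSpace ℝ (Fin d), ∀ t ∈ Set.Icc (0 : ℝ) t₀,
      HasDerivWithinAt (fun s => φ (s, X s z)) (Dφ (t, X t z) (1, u t (X t z)))
        (Set.Icc 0 t₀) t := by
    intro z t ht
    have hcurve : HasDerivWithinAt (fun s => (s, X s z)) ((1 : ℝ), u t (X t z))
        (Set.Icc 0 t₀) t :=
      (hasDerivWithinAt_id t _).prodMk (hX_ode z t ht)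
    exact (hφd (t, X t z)).hasFDerivAt.comp_hasDerivWithinAt t hcurve
  -- continuity facts along the flow
  have hXz : ∀ z : EuclideanSpace ℝ (Fin d), ContinuousOn (fun s => X s z) (Set.Icc 0 t₀) := by
    intro z
    exact hX_cont.comp (continuousOn_id.prodMk continuousOn_const)
      (fun t ht => ⟨ht, trivial⟩)
  -- FTC for each z
  have hFTC : ∀ z : EuclideanSpace ℝ (Fin d),
      (∫ t in Set.Ioc (0 : ℝ) t₀, Dφ (t, X t z) (1, u t (X t z))) = - φ (0, z) := by
    intro z
    have hgc : ContinuousOn (fun s => φ (s, X s z)) (Set.Icc 0 t₀) :=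
      hφ.continuous.comp_continuousOn (continuousOn_id.prodMk (hXz z))
    have huz : ContinuousOn (fun s => u s (X s z)) (Set.Icc 0 t₀) :=
      hu_cont.comp (continuousOn_id.prodMk (hXz z)) (fun t ht => ⟨ht, trivial⟩)
    have hg'c : ContinuousOn (fun s => Dφ (s, X s z) (1, u s (X s z))) (Set.Icc 0 t₀) :=
      (hDφc.comp_continuousOn (continuousOn_id.prodMk (hXz z))).clm_apply
        (continuousOn_const.prodMk huz)
    have hint : IntervalIntegrable (fun s => Dφ (s, X s z) (1, u s (X s z)))
        volume 0 t₀ := by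
      apply ContinuousOn.intervalIntegrable
      rwa [Set.uIcc_of_le ht₀.le]
    have := intervalIntegral.integral_eq_sub_of_hasDeriv_right_of_le ht₀.le hgc
      (fun t ht => ((hcomp z t (Set.Ioo_subset_Icc_self ht)).hasDerivAt
        (Icc_mem_nhds ht.1 ht.2)).hasDerivWithinAt) hint
    rw [intervalIntegral.integral_of_le ht₀.le] at this
    rw [this, hφt (X t₀ z) t₀ le_rfl, hX0 z, zero_sub]
  -- the integrand as a function on the product space, and its integrability
  set f : ℝ × EuclideanSpace ℝ (Fin d) → ℝ := fun p => Dφ (p.1, X p.1 p.2) (1, u p.1 (X p.1 p.2)) with hfdef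
  have hfc : ContinuousOn f (Set.Icc 0 t₀ ×ˢ (Set.univ : Set (EuclideanSpace ℝ (Fin d)))) := by
    have hXc2 : ContinuousOn (fun p : ℝ × EuclideanSpace ℝ (Fin d) => ((p.1 : ℝ), X p.1 p.2))
        (Set.Icc 0 t₀ ×ˢ (Set.univ : Set (EuclideanSpace ℝ (Fin d)))) :=
      (continuous_fst.continuousOn).prodMk hX_cont
    have h1 := hDφc.comp_continuousOn hXc2
    have h2 : ContinuousOn (fun p : ℝ × EuclideanSpace ℝ (Fin d) => u p.1 (X p.1 p.2))
        (Set.Icc 0 t₀ ×ˢ (Set.univ : Set (EuclideanSpace ℝ (Fin d)))) :=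
      hu_cont.comp hXc2 (fun p hp => ⟨hp.1, trivial⟩)
    exact h1.clm_apply (continuousOn_const.prodMk h2)
  -- compact sets controlling the support
  have hK' : IsCompact (tsupport Dφ) := hDφcs
  have hK₂ : IsCompact (Prod.snd '' tsupport Dφ) := hK'.image continuous_snd
  set S : Set (EuclideanSpace ℝ (Fin d)) := Metric.cthickening (C * t₀) (Prod.snd '' tsupport Dφ) with hSdef
  have hScompact : IsCompact S :=
    Metric.isCompact_of_isClosed_isBounded Metric.isClosed_cthickening
      hK₂.isBounded.cthickening
  -- displacement bound
  have hdisp : ∀ z : EuclideanSpace ℝ (Fin d), ∀ t ∈ Set.Icc (0 : ℝ) t₀, ‖X t z - z‖ ≤ C * t₀ := by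
    intro z t ht
    have := (convex_Icc (0 : ℝ) t₀).norm_image_sub_le_of_norm_hasDerivWithin_le
      (fun s hs => hX_ode z s hs) (fun s hs => hC s hs _) ⟨le_rfl, ht₀.le⟩ ht
    rw [hX0 z, sub_zero, Real.norm_of_nonneg ht.1] at this
    exact this.trans (mul_le_mul_of_nonneg_left ht.2 hC0)
  -- support of f
  have hfsupp : ∀ t ∈ Set.Icc (0 : ℝ) t₀, ∀ z : EuclideanSpace ℝ (Fin d), f (t, z) ≠ 0 → z ∈ S := by
    intro t ht z hfz
    have hD : Dφ (t, X t z) ≠ 0 := by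
      intro h
      apply hfz
      simp only [hfdef, h, ContinuousLinearMap.zero_apply]
    have hmem : (t, X t z) ∈ tsupport Dφ := subset_tsupport _ hD
    have hXmem : X t z ∈ Prod.snd '' tsupport Dφ := ⟨(t, X t z), hmem, rfl⟩
    refine Metric.mem_cthickening_of_dist_le z (X t z) _ _ hXmem ?_
    rw [dist_eq_norm, ← norm_neg, neg_sub]
    exact hdisp z t ht
  -- bound on Dφ
  obtain ⟨M, hM⟩ : ∃ M : ℝ, ∀ p, ‖Dφ p‖ ≤ M :=
    hDφc.bounded_above_of_compact_support hDφcs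
  have hM0 : 0 ≤ M := le_trans (norm_nonneg _) (hM (0, 0))
  -- integrability of f on the product
  have hfint : Integrable f ((volume.restrict (Set.Ioc 0 t₀)).prod μ₀) := by
    have hmeas : AEStronglyMeasurable f ((volume.restrict (Set.Ioc 0 t₀)).prod μ₀) := by
      rw [Measure.restrict_prod_eq_prod_univ]
      exact (hfc.mono (Set.prod_mono Set.Ioc_subset_Icc_self subset_rfl)).aestronglyMeasurable
        (measurableSet_Ioc.prod MeasurableSet.univ)
    have hbound : Integrable ((Set.Ioc (0:ℝ) t₀ ×ˢ S).indicator fun _ => M * (1 + C))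
        ((volume.restrict (Set.Ioc 0 t₀)).prod μ₀) := by
      rw [integrable_indicator_iff (measurableSet_Ioc.prod hScompact.measurableSet)]
      refine (integrableOn_const_iff enorm_ne_top).2 (Or.inr ?_)
      rw [Measure.prod_prod]
      exact ENNReal.mul_lt_top
        (lt_of_le_of_lt (Measure.restrict_apply_le _ _) measure_Ioc_lt_top)
        hScompact.measure_lt_top
    refine hbound.mono' hmeas ?_
    rw [Measure.restrict_prod_eq_prod_univ]
    filter_upwards [ae_restrict_mem (measurableSet_Ioc.prod MeasurableSet.univ)] with p hp
    rcases eq_or_ne (f p) 0 with h0 | h0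
    · rw [h0, norm_zero]
      apply Set.indicator_nonneg
      intro _ _
      positivity
    · have hzS : p.2 ∈ S := hfsupp p.1 (Set.Ioc_subset_Icc_self hp.1) p.2 (by
        simpa using h0)
      have hpmem : p ∈ Set.Ioc (0:ℝ) t₀ ×ˢ S := ⟨hp.1, hzS⟩
      rw [Set.indicator_of_mem hpmem]
      calc ‖f p‖ ≤ ‖Dφ (p.1, X p.1 p.2)‖ * ‖((1 : ℝ), u p.1 (X p.1 p.2))‖ :=
            (Dφ _).le_opNorm _
        _ ≤ M * (1 + C) := by
            apply mul_le_mul (hM _) ?_ (norm_nonneg _) hM0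
            rw [Prod.norm_def]
            apply max_le (by rw [norm_one]; linarith)
            exact le_trans (hC p.1 (Set.Ioc_subset_Icc_self hp.1) _) (by linarith)
  -- identification of the inner integral via the pushforward
  have hA : ∀ t ∈ Set.Ioc (0:ℝ) t₀,
      (∫ z, (deriv (fun s => φ (s, z)) t + ⟪u t z, gradient (fun w => φ (t, w)) z⟫)
          ∂(Measure.map (X t) μ₀))
        = ∫ z, f (t, z) ∂μ₀ := by
    intro t ht
    have htI : t ∈ Set.Icc (0:ℝ) t₀ := Set.Ioc_subset_Icc_self ht
    have hXtc : Continuous (X t) := by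
      rw [← continuousOn_univ]
      exact hX_cont.comp (continuousOn_const.prodMk continuousOn_id)
        (fun z _ => ⟨htI, trivial⟩)
    have hutc : Continuous (u t) := (hL t htI).continuous
    have hFc : Continuous (fun z : EuclideanSpace ℝ (Fin d) => Dφ (t, z) (1, u t z)) :=
      (hDφc.comp (Continuous.prodMk_right t)).clm_apply (continuous_const.prodMk hutc)
    simp only [key]
    rw [integral_map hXtc.aemeasurable hFc.aestronglyMeasurable]
  -- assemble
  have h1 : (∫ t in Set.Ioc (0 : ℝ) t₀,
        ∫ z, (deriv (fun s => φ (s, z)) t + ⟪u t z, gradient (fun w => φ (t, w)) z⟫)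
          ∂(Measure.map (X t) μ₀))
      = ∫ t in Set.Ioc (0:ℝ) t₀, ∫ z, f (t, z) ∂μ₀ :=
    setIntegral_congr_fun measurableSet_Ioc hA
  have h2 : (∫ t in Set.Ioc (0:ℝ) t₀, ∫ z, f (t, z) ∂μ₀)
      = ∫ z, (∫ t in Set.Ioc (0:ℝ) t₀, f (t, z)) ∂μ₀ :=
    integral_integral_swap hfint
  have h3 : (∫ z, (∫ t in Set.Ioc (0:ℝ) t₀, f (t, z)) ∂μ₀) = ∫ z, -φ (0, z) ∂μ₀ :=
    integral_congr_ae (Filter.Eventually.of_forall fun z => hFTC z)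
  rw [h1, h2, h3, integral_neg, neg_add_cancel]
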